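/- arXiv:1404.2370 — 14 statements merged into one kernel-verified Lean document; each statement's English description precedes it below -/
import Mathlib

section
/- Let ♭ be an interior operator on a preorder P. Then the assignment J sending each V ∈ P to the set J(V) of all sieves on V that contain the morphism ♭V ⟶ V is a Grothendieck topology on P: (i) the maximal sieve on V belongs to J(V); (ii) if S ∈ J(V) and V' ≤ V, then the pullback of S along the morphism V' ⟶ V belongs to J(V'); (iii) if S ∈ J(V) and R is a sieve on V such that for every morphism f in S the pullback of R along f is covering, then R ∈ J(V). -/
open CategoryTheory Opposite

universe u

/-- For an interior operator `b` on a preorder `P`, the assignment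
`J V := { S : Sieve V | (homOfLE (hdefl V) : b V ⟶ V) ∈ S }` is a Grothendieck topology:
(i) the maximal sieve is covering, (ii) covering sieves are stable under pullback,
(iii) local character (transitivity). -/
theorem quantization_induces_grothendieck_topology
    {P : Type u} [Preorder P] (b : P → P)
    (hmono : ∀ ⦃V' V : P⦄, V' ≤ V → b V' ≤ b V)
    (hdefl : ∀ V : P, b V ≤ V)
    (hidem : ∀ V : P, b (b V) = b V) :
    (∀ V : P, (⊤ : Sieve V).arrows (homOfLE (hdefl V))) ∧
    (∀ (V V' : P) (h : V' ≤ V) (S : Sieve V),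
      S.arrows (homOfLE (hdefl V)) →
      (S.pullback (homOfLE h)).arrows (homOfLE (hdefl V'))) ∧
    (∀ (V : P) (S R : Sieve V),
      S.arrows (homOfLE (hdefl V)) →
      (∀ (W : P) (f : W ⟶ V), S.arrows f → (R.pullback f).arrows (homOfLE (hdefl W))) →
      R.arrows (homOfLE (hdefl V))) := by
  refine ⟨fun V => trivial, ?_, ?_⟩
  · intro V V' h S hS
    simpa [Sieve.pullback_apply] using S.downward_closed hS (homOfLE (hmono h) : b V' ⟶ b V)
  · intro V S R hS hloc
    have h := hloc (b V) (homOfLE (hdefl V)) hS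
    simp only [Sieve.pullback_apply] at h
    have h2 := R.downward_closed h (eqToHom (hidem V).symm : b V ⟶ b (b V))
    simpa using h2
end

section
/- Let ♭ be an interior operator on a preorder P, J the quantization-induced Grothendieck topology, Q : P^op → Type a presheaf, and S a subpresheaf of Q. Then the J-closure (sheafification) of S is given objectwise by: for every V ∈ P, (closure of S)(V) = { q ∈ Q(V) | the restriction of q along ♭V ≤ V lies in S(♭V) }. -/
open CategoryTheory Opposite

universe u v

/-- The quantization-induced Grothendieck topology on a preorder `P` carrying an interior
operator `b`: a sieve on `V` is covering iff it contains the morphism `b V ⟶ V`. -/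
def qTop {P : Type u} [Preorder P] (b : P → P)
    (hmono : ∀ ⦃V' V : P⦄, V' ≤ V → b V' ≤ b V)
    (hdefl : ∀ V : P, b V ≤ V)
    (hidem : ∀ V : P, b (b V) = b V) : GrothendieckTopology P where
  sieves V := {S : Sieve V | S.arrows (homOfLE (hdefl V))}
  top_mem' V := trivial
  pullback_stable' := by
    intro V V' S f hS
    have h1 : b V' ≤ b V := hmono (leOfHom f)
    have h2 : S.arrows (homOfLE h1 ≫ homOfLE (hdefl V)) := S.downward_closed hS (homOfLE h1)
    show S.arrows (homOfLE (hdefl V') ≫ f)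
    exact (Subsingleton.elim _ _ : homOfLE h1 ≫ homOfLE (hdefl V) = homOfLE (hdefl V') ≫ f) ▸ h2
  transitive' := by
    intro V S hS R hR
    have h2 := hR hS
    simp only [Set.mem_setOf_eq, Sieve.pullback_apply] at h2 ⊢
    have key : ∀ (W : P), W = b V → ∀ (f : W ⟶ V), R.arrows f → R.arrows (homOfLE (hdefl V)) := by
      rintro W rfl f hf
      exact (Subsingleton.elim f (homOfLE (hdefl V))) ▸ hf
    exact key (b (b V)) (hidem V) _ h2

/-- the `J`-closure of a subpresheaf `S` of `Q` is given objectwise by the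
sections of `Q` whose restriction along `b V ≤ V` lies in `S (b V)`. -/
theorem closure_of_subpresheaf_eq
    {P : Type u} [Preorder P] (b : P → P)
    (hmono : ∀ ⦃V' V : P⦄, V' ≤ V → b V' ≤ b V)
    (hdefl : ∀ V : P, b V ≤ V)
    (hidem : ∀ V : P, b (b V) = b V)
    (Q : Pᵒᵖ ⥤ Type v) (S : Subfunctor Q) (V : P) :
    (S.sheafify (qTop b hmono hdefl hidem)).obj (op V) =
      {q : Q.obj (op V) | Q.map (homOfLE (hdefl V)).op q ∈ S.obj (op (b V))} := by
  ext q
  constructor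
  · intro hq
    exact hq
  · intro hq
    exact hq
end

section
/- Let ♭ be an interior operator on a preorder P, J the quantization-induced Grothendieck topology, and Q : P^op → Type a presheaf. Then the presheaf ♭*Q, defined by (♭*Q)(V) := Q(♭V) with restriction along V' ≤ V given by the restriction of Q along ♭V' ≤ ♭V, satisfies the sheaf condition for J (every matching family for a J-covering sieve has a unique amalgamation). -/
open CategoryTheory Opposite

universe u v

/-- The presheaf `♭*Q`, with `(♭*Q)(V) := Q(♭V)` and restriction along `V' ≤ V` given by the
restriction of `Q` along `♭V' ≤ ♭V`. -/
def flatStar {P : Type u} [Preorder P] (b : P → P)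
    (hmono : ∀ ⦃V' V : P⦄, V' ≤ V → b V' ≤ b V)
    (Q : Pᵒᵖ ⥤ Type v) : Pᵒᵖ ⥤ Type v where
  obj V := Q.obj (op (b V.unop))
  map {_ _} f := Q.map (homOfLE (hmono (leOfHom f.unop))).op
  map_id V := Q.map_id (op (b V.unop))
  map_comp {_ _ _} _ _ := Q.map_comp _ _

/-- the presheaf `♭*Q` satisfies the sheaf condition for the
quantization-induced Grothendieck topology. -/
theorem flatStar_isSheaf
    {P : Type u} [Preorder P] (b : P → P)
    (hmono : ∀ ⦃V' V : P⦄, V' ≤ V → b V' ≤ b V)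
    (hdefl : ∀ V : P, b V ≤ V)
    (hidem : ∀ V : P, b (b V) = b V)
    (Q : Pᵒᵖ ⥤ Type v) :
    Presieve.IsSheaf (qTop b hmono hdefl hidem) (flatStar b hmono Q) := by
  have mapmap : ∀ {A B C : Pᵒᵖ} (f : A ⟶ B) (g : B ⟶ C) (a : Q.obj A),
      Q.map g (Q.map f a) = Q.map (f ≫ g) a := by
    intro A B C f g a
    rw [Q.map_comp]; rfl
  have endo : ∀ {A : Pᵒᵖ} (f : A ⟶ A) (a : Q.obj A), Q.map f a = a := by
    intro A f a
    rw [Subsingleton.elim f (𝟙 A), Q.map_id]; rfl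
  intro V S hS x hx
  -- hS : S.arrows (homOfLE (hdefl V))
  set f0 : b V ⟶ V := homOfLE (hdefl V) with hf0
  -- the amalgamation
  refine ⟨Q.map (homOfLE ((hidem V).ge)).op (x f0 hS), ?_, ?_⟩
  · intro W f hf
    -- use compatibility
    have key := hx (homOfLE (hdefl W)) (homOfLE (hmono (leOfHom f))) hf hS
      (Subsingleton.elim _ _)
    -- key : (flatStar ..).map _ (x f hf) = (flatStar ..).map _ (x f0 hS)
    show Q.map (homOfLE (hmono (leOfHom f))).op
      (Q.map (homOfLE ((hidem V).ge)).op (x f0 hS)) = x f hf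
    have h1 : x f hf =
        Q.map (homOfLE ((hidem W).ge)).op
          (Q.map (homOfLE (hmono (hdefl W))).op (x f hf)) := by
      erw [mapmap, endo]
    rw [h1]
    have key' : Q.map (homOfLE (hmono (hdefl W))).op (x f hf)
        = Q.map (homOfLE (hmono (hmono (leOfHom f)))).op (x f0 hS) := key
    erw [key', mapmap, mapmap, Subsingleton.elim
      ((homOfLE ((hidem V).ge)).op ≫ (homOfLE (hmono (leOfHom f))).op)
      ((homOfLE (hmono (hmono (leOfHom f)))).op ≫ (homOfLE ((hidem W).ge)).op)]
  · intro t' ht'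
    have h := ht' f0 hS
    -- h : (flatStar ..).map f0.op t' = x f0 hS
    have h' : Q.map (homOfLE (hmono (hdefl V))).op t' = x f0 hS := h
    erw [← h', mapmap, endo]
end

section
/- Let ♭ be an interior operator on a preorder P and J the quantization-induced Grothendieck topology. A presheaf Q : P^op → Type satisfies the sheaf condition for J if and only if for every V ∈ P the restriction map Q(V) → Q(♭V) along the morphism ♭V ≤ V is a bijection. -/
open CategoryTheory Opposite

universe u v

/-- a presheaf `Q` on `P` is a sheaf for the quantization-induced topology iff
all the restriction maps `Q(V) → Q(♭V)` are bijections. -/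
theorem isSheaf_iff_restriction_bijective
    {P : Type u} [Preorder P] (b : P → P)
    (hmono : ∀ ⦃V' V : P⦄, V' ≤ V → b V' ≤ b V)
    (hdefl : ∀ V : P, b V ≤ V)
    (hidem : ∀ V : P, b (b V) = b V)
    (Q : Pᵒᵖ ⥤ Type v) :
    Presieve.IsSheaf (qTop b hmono hdefl hidem) Q ↔
      ∀ V : P, Function.Bijective (Q.map (homOfLE (hdefl V)).op) := by
  constructor
  · intro hsheaf V
    set S : Sieve V :=
      { arrows := fun W _ => W ≤ b V
        downward_closed := fun {W W'} {f} h g => le_trans (leOfHom g) h } with hSdef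
    have hScov : S ∈ (qTop b hmono hdefl hidem) V := le_refl (b V)
    constructor
    · intro t1 t2 hEq
      set x : Presieve.FamilyOfElements Q (S : Presieve V) :=
        fun W f hf => Q.map (homOfLE hf).op (Q.map (homOfLE (hdefl V)).op t1) with hx
      have hcompat : x.Compatible := by
        intro W1 W2 Z g1 g2 f1 f2 h1 h2 hcomm
        simp only [hx, ← FunctorToTypes.map_comp_apply, ← op_comp]
        congr 2
      have h1 : x.IsAmalgamation t1 := by
        intro W f hf
        simp only [hx, ← FunctorToTypes.map_comp_apply, ← op_comp]
        congr 2
      have h2 : x.IsAmalgamation t2 := by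
        intro W f hf
        simp only [hx, hEq, ← FunctorToTypes.map_comp_apply, ← op_comp]
        congr 2
      exact ((hsheaf S hScov x hcompat).unique h1 h2)
    · intro y
      set x : Presieve.FamilyOfElements Q (S : Presieve V) :=
        fun W f hf => Q.map (homOfLE hf).op y with hx
      have hcompat : x.Compatible := by
        intro W1 W2 Z g1 g2 f1 f2 h1 h2 hcomm
        simp only [hx, ← FunctorToTypes.map_comp_apply, ← op_comp]
        congr 2
      obtain ⟨t, ht, -⟩ := hsheaf S hScov x hcompat
      refine ⟨t, ?_⟩
      have := ht (homOfLE (hdefl V)) (le_refl (b V))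
      rw [this, hx]
      have : (homOfLE (le_refl (b V))) = 𝟙 (b V) := Subsingleton.elim _ _
      simp [this]
  · intro hb V S hS x hcompat
    set e := Equiv.ofBijective _ (hb V) with he
    refine ⟨e.symm (x (homOfLE (hdefl V)) hS), ?_, ?_⟩
    · intro W f hf
      apply (hb W).1
      show Q.map (homOfLE (hdefl W)).op _ = Q.map (homOfLE (hdefl W)).op _
      have step1 : Q.map (homOfLE (hdefl V)).op (e.symm (x (homOfLE (hdefl V)) hS))
          = x (homOfLE (hdefl V)) hS := e.apply_symm_apply _
      calc Q.map (homOfLE (hdefl W)).op (Q.map f.op (e.symm (x (homOfLE (hdefl V)) hS)))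
          = Q.map ((homOfLE (hdefl W)) ≫ f).op (e.symm (x (homOfLE (hdefl V)) hS)) := by
            rw [op_comp, FunctorToTypes.map_comp_apply]
        _ = Q.map ((homOfLE (hmono (leOfHom f))) ≫ (homOfLE (hdefl V))).op
              (e.symm (x (homOfLE (hdefl V)) hS)) := by
            congr 2
        _ = Q.map (homOfLE (hmono (leOfHom f))).op (x (homOfLE (hdefl V)) hS) := by
            rw [op_comp, FunctorToTypes.map_comp_apply, step1]
        _ = Q.map (homOfLE (hdefl W)).op (x f hf) := by
            exact (hcompat (homOfLE (hdefl W)) (homOfLE (hmono (leOfHom f))) hf hS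
              (Subsingleton.elim _ _)).symm
    · intro t' ht'
      have : e t' = x (homOfLE (hdefl V)) hS := ht' (homOfLE (hdefl V)) hS
      rw [← this, Equiv.symm_apply_apply]
end

section
/- Let ♭ be an interior operator on a preorder P and J the quantization-induced Grothendieck topology. For every presheaf Q : P^op → Type, the natural transformation ζ_Q : Q ⟶ ♭*Q (whose component at V is the restriction map Q(V) → Q(♭V) along ♭V ≤ V) exhibits ♭*Q as the J-sheafification of Q: for every presheaf R satisfying the sheaf condition for J and every natural transformation f : Q ⟶ R, there exists a unique natural transformation g : ♭*Q ⟶ R with g ∘ ζ_Q = f. -/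
open CategoryTheory Opposite

universe u v

/-- The canonical natural transformation `ζ_Q : Q ⟶ ♭*Q`, whose component at `V` is the
restriction map `Q(V) → Q(♭V)` along `♭V ≤ V`. -/
def zeta {P : Type u} [Preorder P] (b : P → P)
    (hmono : ∀ ⦃V' V : P⦄, V' ≤ V → b V' ≤ b V)
    (hdefl : ∀ V : P, b V ≤ V)
    (Q : Pᵒᵖ ⥤ Type v) : Q ⟶ flatStar b hmono Q where
  app V := Q.map (homOfLE (hdefl V.unop)).op
  naturality {V W} f := by
    dsimp [flatStar]
    rw [← Q.map_comp, ← Q.map_comp]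
    rfl

/-- `ζ_Q : Q ⟶ ♭*Q` exhibits `♭*Q` as the `J`-sheafification of `Q`:
every map from `Q` to a `J`-sheaf `R` factors uniquely through `ζ_Q`. -/
theorem flatStar_is_sheafification
    {P : Type u} [Preorder P] (b : P → P)
    (hmono : ∀ ⦃V' V : P⦄, V' ≤ V → b V' ≤ b V)
    (hdefl : ∀ V : P, b V ≤ V)
    (hidem : ∀ V : P, b (b V) = b V)
    (Q : Pᵒᵖ ⥤ Type v) :
    ∀ R : Pᵒᵖ ⥤ Type v, Presieve.IsSheaf (qTop b hmono hdefl hidem) R →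
      ∀ f : Q ⟶ R, ∃! g : flatStar b hmono Q ⟶ R, zeta b hmono hdefl Q ≫ g = f := by
  intro R hR f
  -- homs in Pᵒᵖ between fixed objects are subsingletons
  have hsub : ∀ {X Y : Pᵒᵖ} (h₁ h₂ : X ⟶ Y), h₁ = h₂ := by
    intro X Y h₁ h₂
    exact Quiver.Hom.unop_inj (Subsingleton.elim _ _)
  -- restriction R(V) → R(bV) is bijective
  have key : ∀ V : P, Function.Bijective (R.map (homOfLE (hdefl V)).op) := by
    intro V
    let S : Sieve V :=
      { arrows := fun W _ => W ≤ b V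
        downward_closed := fun {W W'} g hg g' => le_trans (leOfHom g') hg }
    have hS : S ∈ (qTop b hmono hdefl hidem) V := le_refl (b V)
    have hsheaf : Presieve.IsSheafFor R S.arrows := hR S hS
    constructor
    · intro r₁ r₂ h
      have hfam : ∀ {W : P} (g : W ⟶ V), S.arrows g →
          R.map g.op r₁ = R.map g.op r₂ := by
        intro W g hg
        have : g = homOfLE hg ≫ homOfLE (hdefl V) := Subsingleton.elim _ _
        rw [this, op_comp, FunctorToTypes.map_comp_apply, FunctorToTypes.map_comp_apply, h]
      let x : Presieve.FamilyOfElements R S.arrows := fun W g hg => R.map g.op r₁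
      have hx : x.Compatible := by
        intro Y Z W g₁ g₂ f₁ f₂ h₁ h₂ hcomm
        simp only [x, ← FunctorToTypes.map_comp_apply, ← op_comp]
        congr 1
      have ham₁ : x.IsAmalgamation r₁ := fun W g hg => rfl
      have ham₂ : x.IsAmalgamation r₂ := fun W g hg => (hfam g hg).symm
      exact (hsheaf.isSeparatedFor x r₁ r₂ ham₁ ham₂)
    · intro s
      let x : Presieve.FamilyOfElements R S.arrows := fun W g hg =>
        R.map (homOfLE hg).op s
      have hx : x.Compatible := by
        intro Y Z W g₁ g₂ f₁ f₂ h₁ h₂ hcomm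
        simp only [x, ← FunctorToTypes.map_comp_apply, ← op_comp]
        congr 1
      obtain ⟨t, ht, -⟩ := hsheaf x hx
      refine ⟨t, ?_⟩
      have := ht (homOfLE (hdefl V)) (le_refl (b V))
      have h0 : (homOfLE (le_refl (b V)) : b V ⟶ b V) = 𝟙 (b V) := Subsingleton.elim _ _
      simpa [x, h0] using this
  let e : ∀ V : Pᵒᵖ, R.obj V ≃ R.obj (op (b V.unop)) := fun V =>
    Equiv.ofBijective _ (key V.unop)
  have he : ∀ V : Pᵒᵖ, (e V : R.obj V → R.obj (op (b V.unop)))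
      = R.map (homOfLE (hdefl V.unop)).op := fun _ => rfl
  refine ⟨{ app := fun V => TypeCat.ofHom (fun x => (e V).symm (f.app (op (b V.unop)) x)),
            naturality := ?_ }, ?_, ?_⟩
  · intro V W h
    ext x
    simp only [types_comp_apply]
    change (e W).symm (f.app (op (b W.unop)) ((flatStar b hmono Q).map h x)) = R.map h ((e V).symm (f.app (op (b V.unop)) x))
    apply (e W).injective
    rw [Equiv.apply_symm_apply]
    have : (e W) (R.map h ((e V).symm (f.app (op (b V.unop)) x)))
        = R.map (homOfLE (hmono (leOfHom h.unop))).op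
            ((e V) ((e V).symm (f.app (op (b V.unop)) x))) := by
      rw [he, he, ← FunctorToTypes.map_comp_apply, ← FunctorToTypes.map_comp_apply]
      exact congrFun (congrArg (fun k => ⇑(ConcreteCategory.hom (R.map k))) (hsub _ _)) _
    rw [this, Equiv.apply_symm_apply]
    exact (FunctorToTypes.naturality f (homOfLE (hmono (leOfHom h.unop))).op x)
  · ext V x
    apply (e V).injective
    simp only [NatTrans.comp_app, types_comp_apply, Equiv.apply_symm_apply]
    change (e V) ((e V).symm (f.app (op (b V.unop)) ((zeta b hmono hdefl Q).app V x))) = (e V) (f.app V x)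
    rw [Equiv.apply_symm_apply]
    show f.app (op (b V.unop)) ((zeta b hmono hdefl Q).app V x) = (e V) (f.app V x)
    rw [he]
    exact (FunctorToTypes.naturality f (homOfLE (hdefl V.unop)).op x)
  · intro g' hg'
    ext V x
    apply (e V).injective
    change (e V) (g'.app V x) = (e V) ((e V).symm (f.app (op (b V.unop)) x))
    rw [Equiv.apply_symm_apply, he]
    have hnat := (FunctorToTypes.naturality g' (homOfLE (hdefl V.unop)).op x)
    dsimp [flatStar] at hnat
    refine Eq.trans hnat.symm ?_
    have hfac := congrArg (fun (t : Q ⟶ R) => NatTrans.app t (op (b V.unop)) x) hg'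
    dsimp [zeta] at hfac ⊢
    have heq : (homOfLE (hmono (leOfHom (homOfLE (hdefl V.unop))))).op
        = (homOfLE (hdefl (b V.unop))).op := hsub _ _
    rw [heq]
    exact hfac
end

section
/- Let ♭ be an interior operator on a preorder P, J the quantization-induced Grothendieck topology, Q : P^op → Type a presheaf, and A a subpresheaf of ♭*Q. Then the J-closure of A in ♭*Q is given at each V ∈ P by A(♭V) (a subset of (♭*Q)(V) = Q(♭V), using ♭(♭V) = ♭V). Consequently, A is J-closed in ♭*Q if and only if A(V) = A(♭V) for every V ∈ P. -/
open CategoryTheory Opposite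

universe u v

/-- for a subpresheaf `A` of `♭*Q`, the `J`-closure of `A` at `V` is `A(♭V)`
(viewed inside `(♭*Q)(V) = Q(♭V)` via the restriction map of `♭*Q` along `♭V ≤ V`, which is
the canonical identification coming from `♭(♭V) = ♭V`); consequently `A` is `J`-closed in
`♭*Q` iff `A(V) = A(♭V)` for every `V`. -/
theorem closure_in_flatStar
    {P : Type u} [Preorder P] (b : P → P)
    (hmono : ∀ ⦃V' V : P⦄, V' ≤ V → b V' ≤ b V)
    (hdefl : ∀ V : P, b V ≤ V)
    (hidem : ∀ V : P, b (b V) = b V)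
    (Q : Pᵒᵖ ⥤ Type v) (A : Subfunctor (flatStar b hmono Q)) :
    (∀ V : P, (A.sheafify (qTop b hmono hdefl hidem)).obj (op V) =
      ((flatStar b hmono Q).map (homOfLE (hdefl V)).op) ⁻¹' (A.obj (op (b V)))) ∧
    (A.sheafify (qTop b hmono hdefl hidem) = A ↔
      ∀ V : P, A.obj (op V) =
        ((flatStar b hmono Q).map (homOfLE (hdefl V)).op) ⁻¹' (A.obj (op (b V)))) := by
  have hobj : ∀ V : P, (A.sheafify (qTop b hmono hdefl hidem)).obj (op V) =
      ((flatStar b hmono Q).map (homOfLE (hdefl V)).op) ⁻¹' (A.obj (op (b V))) := fun V => rfl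
  refine ⟨hobj, ?_⟩
  constructor
  · intro h V
    have := hobj V
    rw [h] at this
    exact this
  · intro h
    refine le_antisymm (fun U s hs => ?_) (A.le_sheafify _)
    exact (h U.unop).ge ((hobj U.unop).le hs)
end

section
/- Let ♭ be an interior operator on a preorder P and let D_j be a J-closed lower set of P. Then the set γ^∧(D_j) := { V ∈ P | there exists W ∈ D_j with V ≤ ♭W } is a lower set, it is a translation of D_j, and it is the minimum translation: every lower set D that is a translation of D_j satisfies γ^∧(D_j) ⊆ D. -/
universe u

/-- for a `J`-closed lower set `D_j`, the set
`γ^∧(D_j) := {V | ∃ W ∈ D_j, V ≤ ♭W}` is a lower set, a translation of `D_j`, and the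
minimum translation. -/
theorem min_translation
    {P : Type u} [Preorder P] (b : P → P)
    (hmono : ∀ ⦃V' V : P⦄, V' ≤ V → b V' ≤ b V)
    (hdefl : ∀ V : P, b V ≤ V)
    (hidem : ∀ V : P, b (b V) = b V)
    (Dj : Set P) (hDj : IsLowerSet Dj) (hclosed : ∀ V : P, b V ∈ Dj → V ∈ Dj) :
    IsLowerSet {V : P | ∃ W ∈ Dj, V ≤ b W} ∧
    (∀ V : P, V ∈ Dj ↔ b V ∈ {V : P | ∃ W ∈ Dj, V ≤ b W}) ∧
    (∀ D : Set P, IsLowerSet D → (∀ V : P, V ∈ Dj ↔ b V ∈ D) →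
      {V : P | ∃ W ∈ Dj, V ≤ b W} ⊆ D) := by
  refine ⟨?_, ?_, ?_⟩
  · intro V V' h ⟨W, hW, hle⟩
    exact ⟨W, hW, le_trans h hle⟩
  · intro V
    constructor
    · intro hV; exact ⟨V, hV, le_refl _⟩
    · rintro ⟨W, hW, hle⟩
      exact hclosed V (hDj (le_trans hle (hdefl W)) hW)
  · rintro D hD htr V ⟨W, hW, hle⟩
    exact hD hle ((htr W).mp hW)
end

section
/- Let ♭ be an interior operator on a preorder P. For every J-closed lower set D_j of P, the set of all translations of D_j is exactly the interval { D lower set of P | γ^∧(D_j) ⊆ D ⊆ D_j }, where γ^∧(D_j) := { V ∈ P | there exists W ∈ D_j with V ≤ ♭W }. Moreover, these sets of translations, indexed by the J-closed lower sets D_j, are pairwise disjoint and their union is the collection of all lower sets of P (i.e., every lower set of P is a translation of exactly one J-closed lower set). -/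
universe u

/-- coarse-graining of truth-values: for every `J`-closed lower set `D_j`,
its translations are exactly the lower sets in the interval `[γ^∧(D_j), D_j]`; moreover
every lower set of `P` is a translation of exactly one `J`-closed lower set, so the lower
sets of `P` are partitioned into these intervals. -/
theorem coarse_graining_of_truth_values
    {P : Type u} [Preorder P] (b : P → P)
    (hmono : ∀ ⦃V' V : P⦄, V' ≤ V → b V' ≤ b V)
    (hdefl : ∀ V : P, b V ≤ V)
    (hidem : ∀ V : P, b (b V) = b V) :
    (∀ Dj : Set P, IsLowerSet Dj → (∀ V : P, b V ∈ Dj → V ∈ Dj) →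
      ∀ D : Set P, IsLowerSet D →
        ((∀ V : P, V ∈ Dj ↔ b V ∈ D) ↔
          ({V : P | ∃ W ∈ Dj, V ≤ b W} ⊆ D ∧ D ⊆ Dj))) ∧
    (∀ D : Set P, IsLowerSet D →
      ∃! Dj : Set P, IsLowerSet Dj ∧ (∀ V : P, b V ∈ Dj → V ∈ Dj) ∧
        (∀ V : P, V ∈ Dj ↔ b V ∈ D)) := by
  constructor
  · intro Dj hDjlow hDjcl D hDlow
    constructor
    · intro htr
      constructor
      · rintro V ⟨W, hW, hle⟩
        exact hDlow hle ((htr W).mp hW)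
      · intro V hV
        apply hDjcl
        exact (htr (b V)).mpr (by rw [hidem]; exact hDlow (hdefl V) hV)
    · rintro ⟨h1, h2⟩ V
      constructor
      · intro hV
        exact h1 ⟨V, hV, le_refl _⟩
      · intro hV
        exact hDjcl V (h2 hV)
  · intro D hDlow
    refine ⟨{V | b V ∈ D}, ⟨?_, ?_, fun V => Iff.rfl⟩, ?_⟩
    · intro V' V h hV
      exact hDlow (hmono h) hV
    · intro V hV
      simpa [hidem] using hV
    · rintro Dj ⟨_, _, htr⟩
      ext V
      exact (htr V).trans Iff.rfl
end

section
/- Let (P, ♭, L, O) be an outer-presheaf structure. For every x ∈ L, the family δ_j(x) defined by δ_j(x)_V := δ(x)_{♭V} is a global element of the outer sheaf ♭*O; that is, δ_j(x)_V ∈ O(♭V) for all V, δ_j(x)_{♭V} = δ_j(x)_V for all V, and for all V' ≤ V one has δ(δ_j(x)_V)_{♭V'} = δ_j(x)_{V'}. In particular δ_j(x) is a hyper-element of ♭*O. -/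
universe u v

/-- The daseinization of `x ∈ L` at `V ∈ P`: the infimum of the elements of `O V` above `x`. -/
def dasein {P : Type u} {L : Type v} [CompleteLattice L]
    (O : P → Set L) (x : L) (V : P) : L :=
  sInf {y | y ∈ O V ∧ x ≤ y}

/-- for every `x ∈ L`, the family `δ_j(x)` with `δ_j(x)_V := δ(x)_{♭V}` is a
global element of the outer sheaf `♭*O`; in particular it is a hyper-element of `♭*O`. -/
theorem daseinization_j_is_global_element
    {P : Type u} [Preorder P] (b : P → P)
    (hmono : ∀ ⦃V' V : P⦄, V' ≤ V → b V' ≤ b V)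
    (hdefl : ∀ V : P, b V ≤ V)
    (hidem : ∀ V : P, b (b V) = b V)
    {L : Type v} [CompleteLattice L] (O : P → Set L)
    (hOmono : ∀ ⦃V' V : P⦄, V' ≤ V → O V' ⊆ O V)
    (hInf : ∀ (V : P) (T : Set L), T ⊆ O V → sInf T ∈ O V)
    (hSup : ∀ (V : P) (T : Set L), T ⊆ O V → sSup T ∈ O V)
    (x : L) :
    (∀ V : P, dasein O x (b V) ∈ O (b V)) ∧
    (∀ V : P, dasein O x (b (b V)) = dasein O x (b V)) ∧
    (∀ ⦃V' V : P⦄, V' ≤ V → dasein O (dasein O x (b V)) (b V') = dasein O x (b V')) ∧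
    (∀ ⦃V' V : P⦄, V' ≤ V → dasein O (dasein O x (b V)) (b V') ≤ dasein O x (b V')) := by

  have hle : ∀ (z : L) (V : P), z ≤ dasein O z V := fun z V =>
    le_sInf fun y hy => hy.2
  have key : ∀ ⦃V' V : P⦄, V' ≤ V →
      dasein O (dasein O x (b V)) (b V') = dasein O x (b V') := by
    intro V' V h
    apply le_antisymm
    · apply le_sInf
      intro y hy
      apply sInf_le
      refine ⟨hy.1, sInf_le ⟨hOmono (hmono h) hy.1, hy.2⟩⟩
    · apply le_sInf
      intro y hy
      exact le_trans (sInf_le ⟨hy.1, (hle x (b V)).trans hy.2⟩) le_rfl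
  refine ⟨fun V => hInf _ _ fun y hy => hy.1, fun V => by rw [hidem], key,
    fun V' V h => (key h).le⟩
end

section
/- Let (P, ♭, L, O) be an outer-presheaf structure and let k be a hyper-element of ♭*O. Then the family h defined by h_V := k_V for all V ∈ P is a hyper-element of O that is a translation of k (i.e., h_{♭V} = k_V for all V), and it is the largest translation: every hyper-element h' of O with h'_{♭V} = k_V for all V satisfies h'_V ≤ h_V for all V ∈ P. -/
universe u v

/-- for a hyper-element `k` of `♭*O`, the family `h := k` is a hyper-element
of `O` which is a translation of `k`, and it is the largest translation: every
hyper-element `h'` of `O` with `h'_{♭V} = k_V` satisfies `h'_V ≤ h_V = k_V`. -/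
theorem max_translation_of_proposition
    {P : Type u} [Preorder P] (b : P → P)
    (hmono : ∀ ⦃V' V : P⦄, V' ≤ V → b V' ≤ b V)
    (hdefl : ∀ V : P, b V ≤ V)
    (hidem : ∀ V : P, b (b V) = b V)
    {L : Type v} [CompleteLattice L] (O : P → Set L)
    (hOmono : ∀ ⦃V' V : P⦄, V' ≤ V → O V' ⊆ O V)
    (hInf : ∀ (V : P) (T : Set L), T ⊆ O V → sInf T ∈ O V)
    (hSup : ∀ (V : P) (T : Set L), T ⊆ O V → sSup T ∈ O V)
    (k : P → L)
    (hk1 : ∀ V : P, k V ∈ O (b V))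
    (hk2 : ∀ V : P, k (b V) = k V)
    (hk3 : ∀ ⦃V' V : P⦄, V' ≤ V → dasein O (k V) (b V') ≤ k V') :
    ((∀ V : P, k V ∈ O V) ∧ (∀ ⦃V' V : P⦄, V' ≤ V → dasein O (k V) V' ≤ k V')) ∧
    (∀ V : P, k (b V) = k V) ∧
    (∀ h' : P → L, (∀ V : P, h' V ∈ O V) →
      (∀ ⦃V' V : P⦄, V' ≤ V → dasein O (h' V) V' ≤ h' V') →
      (∀ V : P, h' (b V) = k V) → ∀ V : P, h' V ≤ k V) := by
  refine ⟨⟨fun V => hOmono (hdefl V) (hk1 V), fun V' V hVV => ?_⟩, hk2, ?_⟩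
  · calc dasein O (k V) V' ≤ dasein O (k V) (b V') := by
          apply sInf_le_sInf
          intro y hy
          exact ⟨hOmono (hdefl V') hy.1, hy.2⟩
      _ ≤ k V' := hk3 hVV
  · intro h' hh1 hh2 hh3 V
    calc h' V ≤ dasein O (h' V) (b V) := le_sInf fun y hy => hy.2
      _ ≤ h' (b V) := hh2 (hdefl V)
      _ = k V := hh3 V
end

section
/- Let (P, ♭, L, O) be an outer-presheaf structure and let k be a hyper-element of ♭*O. Define h^∧ by h^∧_V := ⨆ { δ(k_W)_V | W ∈ P, V ≤ ♭W } (the supremum in L of this possibly empty set, which lies in O(V) by sup-closedness). Then h^∧ is a hyper-element of O, it is a translation of k (i.e., h^∧_{♭V} = k_V for all V), and it is the smallest translation: every hyper-element h' of O with h'_{♭V} = k_V for all V satisfies h^∧_V ≤ h'_V for all V ∈ P. -/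
universe u v

/-- for a hyper-element `k` of `♭*O`, the family
`h^∧_V := ⨆ { δ(k_W)_V | W ∈ P, V ≤ ♭W }` is a hyper-element of `O`, a translation of `k`,
and the smallest translation of `k`. -/
theorem min_translation_of_proposition
    {P : Type u} [Preorder P] (b : P → P)
    (hmono : ∀ ⦃V' V : P⦄, V' ≤ V → b V' ≤ b V)
    (hdefl : ∀ V : P, b V ≤ V)
    (hidem : ∀ V : P, b (b V) = b V)
    {L : Type v} [CompleteLattice L] (O : P → Set L)
    (hOmono : ∀ ⦃V' V : P⦄, V' ≤ V → O V' ⊆ O V)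
    (hInf : ∀ (V : P) (T : Set L), T ⊆ O V → sInf T ∈ O V)
    (hSup : ∀ (V : P) (T : Set L), T ⊆ O V → sSup T ∈ O V)
    (k : P → L)
    (hk1 : ∀ V : P, k V ∈ O (b V))
    (hk2 : ∀ V : P, k (b V) = k V)
    (hk3 : ∀ ⦃V' V : P⦄, V' ≤ V → dasein O (k V) (b V') ≤ k V') :
    ((∀ V : P, sSup {z : L | ∃ W : P, V ≤ b W ∧ z = dasein O (k W) V} ∈ O V) ∧
      (∀ ⦃V' V : P⦄, V' ≤ V →
        dasein O (sSup {z : L | ∃ W : P, V ≤ b W ∧ z = dasein O (k W) V}) V' ≤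
          sSup {z : L | ∃ W : P, V' ≤ b W ∧ z = dasein O (k W) V'})) ∧
    (∀ V : P, sSup {z : L | ∃ W : P, b V ≤ b W ∧ z = dasein O (k W) (b V)} = k V) ∧
    (∀ h' : P → L, (∀ V : P, h' V ∈ O V) →
      (∀ ⦃V' V : P⦄, V' ≤ V → dasein O (h' V) V' ≤ h' V') →
      (∀ V : P, h' (b V) = k V) →
      ∀ V : P, sSup {z : L | ∃ W : P, V ≤ b W ∧ z = dasein O (k W) V} ≤ h' V) := by

  have self_le : ∀ (x : L) (V : P), x ≤ dasein O x V :=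
    fun x V => le_sInf (fun y hy => hy.2)
  have dmem : ∀ (x : L) (V : P), dasein O x V ∈ O V :=
    fun x V => hInf V _ (fun y hy => hy.1)
  have dle : ∀ (x y : L) (V : P), y ∈ O V → x ≤ y → dasein O x V ≤ y :=
    fun x y V hy hx => sInf_le ⟨hy, hx⟩
  have danti : ∀ (x : L) ⦃V' V : P⦄, V' ≤ V → dasein O x V ≤ dasein O x V' :=
    fun x V' V h => sInf_le_sInf (fun y hy => ⟨hOmono h hy.1, hy.2⟩)
  refine ⟨⟨fun V => hSup V _ ?_, fun V' V h => ?_⟩, fun V => ?_, fun h' h1 h2 h3 V => ?_⟩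
  · rintro z ⟨W, hVW, rfl⟩
    exact dmem _ V
  · apply dle
    · exact hSup V' _ (by rintro z ⟨W, hVW, rfl⟩; exact dmem _ V')
    · apply sSup_le_sSup_of_isCofinalFor
      rintro z ⟨W, hVW, rfl⟩
      exact ⟨dasein O (k W) V', ⟨W, le_trans h hVW, rfl⟩, danti _ h⟩
  · apply le_antisymm
    · apply sSup_le
      rintro z ⟨W, hVW, rfl⟩
      have hbVW : b V ≤ W := le_trans hVW (hdefl W)
      have := hk3 hbVW
      rwa [hidem V, hk2 V] at this
    · apply le_sSup
      refine ⟨V, le_refl _, ?_⟩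
      exact le_antisymm (self_le _ _) (dle _ _ _ (hk1 V) le_rfl)
  · apply sSup_le
    rintro z ⟨W, hVW, rfl⟩
    rw [← h3 W]
    exact h2 hVW
end

section
/- Let (P, ♭, L, O) be an outer-presheaf structure. (i) For every hyper-element h of O, the family k defined by k_V := h_{♭V} is a hyper-element of ♭*O, and it is the unique hyper-element of ♭*O of which h is a translation. (ii) For every hyper-element k of ♭*O, a hyper-element h of O is a translation of k if and only if h^∧_V ≤ h_V ≤ k_V for all V ∈ P, where h^∧_V := ⨆ { δ(k_W)_V | W ∈ P, V ≤ ♭W }. Consequently the set of hyper-elements of O is the disjoint union, over all hyper-elements k of ♭*O, of the intervals of translations of k. -/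
universe u v

/-- coarse-graining of propositions: (i) every hyper-element `h` of `O` gives
a hyper-element `k := (h_{♭V})_V` of `♭*O`, the unique one of which `h` is a translation;
(ii) a hyper-element `h` of `O` is a translation of a hyper-element `k` of `♭*O` iff
`h^∧_V ≤ h_V ≤ k_V` for all `V`. Hence the hyper-elements of `O` partition into the
intervals of translations of hyper-elements of `♭*O`. -/
theorem coarse_graining_of_propositions
    {P : Type u} [Preorder P] (b : P → P)
    (hmono : ∀ ⦃V' V : P⦄, V' ≤ V → b V' ≤ b V)
    (hdefl : ∀ V : P, b V ≤ V)
    (hidem : ∀ V : P, b (b V) = b V)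
    {L : Type v} [CompleteLattice L] (O : P → Set L)
    (hOmono : ∀ ⦃V' V : P⦄, V' ≤ V → O V' ⊆ O V)
    (hInf : ∀ (V : P) (T : Set L), T ⊆ O V → sInf T ∈ O V)
    (hSup : ∀ (V : P) (T : Set L), T ⊆ O V → sSup T ∈ O V) :
    (∀ h : P → L, (∀ V : P, h V ∈ O V) →
      (∀ ⦃V' V : P⦄, V' ≤ V → dasein O (h V) V' ≤ h V') →
      (((∀ V : P, h (b V) ∈ O (b V)) ∧ (∀ V : P, h (b (b V)) = h (b V)) ∧
        (∀ ⦃V' V : P⦄, V' ≤ V → dasein O (h (b V)) (b V') ≤ h (b V'))) ∧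
       (∀ k : P → L, (∀ V : P, k V ∈ O (b V)) → (∀ V : P, k (b V) = k V) →
        (∀ ⦃V' V : P⦄, V' ≤ V → dasein O (k V) (b V') ≤ k V') →
        (∀ V : P, h (b V) = k V) → k = fun V => h (b V)))) ∧
    (∀ k : P → L, (∀ V : P, k V ∈ O (b V)) → (∀ V : P, k (b V) = k V) →
      (∀ ⦃V' V : P⦄, V' ≤ V → dasein O (k V) (b V') ≤ k V') →
      ∀ h : P → L, (∀ V : P, h V ∈ O V) →
        (∀ ⦃V' V : P⦄, V' ≤ V → dasein O (h V) V' ≤ h V') →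
        ((∀ V : P, h (b V) = k V) ↔
          ∀ V : P, sSup {z : L | ∃ W : P, V ≤ b W ∧ z = dasein O (k W) V} ≤ h V ∧
            h V ≤ k V)) := by
  constructor
  · intro h hmem hhyp
    refine ⟨⟨fun V => hmem (b V), fun V => by rw [hidem], fun V' V hle => hhyp (hmono hle)⟩, ?_⟩
    intro k _ _ _ htr
    funext V
    exact (htr V).symm
  · intro k kmem kidem khyp h hmem hhyp
    constructor
    · intro htr V
      constructor
      · apply sSup_le
        rintro z ⟨W, hVW, rfl⟩
        rw [← htr W]
        exact hhyp hVW
      · rw [← htr V]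
        refine le_trans (le_sInf ?_) (hhyp (hdefl V))
        rintro y ⟨_, hy⟩
        exact hy
    · intro hbd V
      refine le_antisymm ?_ ?_
      · rw [← kidem V]
        exact (hbd (b V)).2
      · calc k V ≤ dasein O (k V) (b V) := le_sInf fun y hy => hy.2
          _ ≤ sSup {z : L | ∃ W : P, b V ≤ b W ∧ z = dasein O (k W) (b V)} :=
              le_sSup ⟨V, le_refl _, rfl⟩
          _ ≤ h (b V) := (hbd (b V)).1
end

section
/- Let (P, ♭, L, O) be an outer-presheaf structure, let μ : L → ℝ be a monotone function (modelling P ↦ tr(ρP) for a density matrix ρ), and let r ∈ ℝ. Fix V ∈ P and let h be a family assigning to each W ≤ ♭V an element h_W ∈ O(W) such that δ(h_W)_{W'} ≤ h_{W'} whenever W' ≤ W ≤ ♭V. Then the following are equivalent: (a) μ(h_W) ≥ r for every W ≤ ♭V; (b) μ(h_{♭W}) ≥ r for every W ≤ V. (This is the statement that the truth presheaf T^{ρ,r} and the truth sheaf T^{ρ,r}_j are each other's translations.) -/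
universe u v

/-- the truth presheaf `T^{ρ,r}` and the truth sheaf `T^{ρ,r}_j` are each
other's translations: for a family `h` over the subalgebras of `♭V` compatible with
daseinization, `μ(h_W) ≥ r` for all `W ≤ ♭V` iff `μ(h_{♭W}) ≥ r` for all `W ≤ V`. -/
theorem truth_object_translation
    {P : Type u} [Preorder P] (b : P → P)
    (hmono : ∀ ⦃V' V : P⦄, V' ≤ V → b V' ≤ b V)
    (hdefl : ∀ V : P, b V ≤ V)
    (hidem : ∀ V : P, b (b V) = b V)
    {L : Type v} [CompleteLattice L] (O : P → Set L)
    (hOmono : ∀ ⦃V' V : P⦄, V' ≤ V → O V' ⊆ O V)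
    (hInf : ∀ (V : P) (T : Set L), T ⊆ O V → sInf T ∈ O V)
    (hSup : ∀ (V : P) (T : Set L), T ⊆ O V → sSup T ∈ O V)
    (mu : L → ℝ) (hmu : Monotone mu) (r : ℝ)
    (V : P) (h : P → L)
    (hmem : ∀ W : P, W ≤ b V → h W ∈ O W)
    (hres : ∀ ⦃W' W : P⦄, W' ≤ W → W ≤ b V → dasein O (h W) W' ≤ h W') :
    (∀ W : P, W ≤ b V → r ≤ mu (h W)) ↔ (∀ W : P, W ≤ V → r ≤ mu (h (b W))) := by
  constructor
  · intro ha W hW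
    exact ha (b W) (hmono hW)
  · intro hb W hW
    have h1 : r ≤ mu (h (b (b V))) := hb (b V) (hdefl V)
    rw [hidem] at h1
    have h2 : h (b V) ≤ dasein O (h (b V)) W := le_sInf fun y hy => hy.2
    have h3 : dasein O (h (b V)) W ≤ h W := hres hW le_rfl
    exact h1.trans (hmu (h2.trans h3))
end

section
/- Let (P, ♭, L, O) be an outer-presheaf structure, let μ : L → ℝ be a monotone function (modelling P ↦ tr(ρP) for a density matrix ρ), and let r ∈ ℝ. Let k be a hyper-element of ♭*O and V ∈ P. If μ(k_W) ≥ r for every W ≤ ♭V, then μ(k_W) ≥ r for every W ≤ V. (This is the sheaf-condition content of the proposition that the truth object T^{ρ,r}_j is a J-sheaf.) -/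
universe u v

/-- sheaf condition for the truth object `T^{ρ,r}_j`: for a hyper-element `k`
of `♭*O`, if `μ(k_W) ≥ r` for every `W ≤ ♭V` then `μ(k_W) ≥ r` for every `W ≤ V`. -/
theorem truth_sheaf_condition
    {P : Type u} [Preorder P] (b : P → P)
    (hmono : ∀ ⦃V' V : P⦄, V' ≤ V → b V' ≤ b V)
    (hdefl : ∀ V : P, b V ≤ V)
    (hidem : ∀ V : P, b (b V) = b V)
    {L : Type v} [CompleteLattice L] (O : P → Set L)
    (hOmono : ∀ ⦃V' V : P⦄, V' ≤ V → O V' ⊆ O V)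
    (hInf : ∀ (V : P) (T : Set L), T ⊆ O V → sInf T ∈ O V)
    (hSup : ∀ (V : P) (T : Set L), T ⊆ O V → sSup T ∈ O V)
    (k : P → L)
    (hk1 : ∀ V : P, k V ∈ O (b V))
    (hk2 : ∀ V : P, k (b V) = k V)
    (hk3 : ∀ ⦃V' V : P⦄, V' ≤ V → dasein O (k V) (b V') ≤ k V')
    (mu : L → ℝ) (hmu : Monotone mu) (r : ℝ) (V : P)
    (hyp : ∀ W : P, W ≤ b V → r ≤ mu (k W)) :
    ∀ W : P, W ≤ V → r ≤ mu (k W) := by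
  intro W hWV
  have := hyp (b W) (hmono hWV)
  rwa [hk2] at this
end
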